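/- Let Θ: X → (-∞,∞] be proper, lower semi-continuous, and strongly convex with modulus c₀. Let x, x₊ ∈ X with ξ ∈ ∂Θ(x) and ξ₊ ∈ ∂Θ(x₊), so that x = ∇Θ*(ξ) and x₊ = ∇Θ*(ξ₊). Then for any x̂ ∈ X, the Bregman distances satisfy D_{ξ₊}Θ(x̂, x₊) - D_ξΘ(x̂, x) ≤ (1/(4c₀))‖ξ₊ - ξ‖² - ⟨ξ₊ - ξ, x̂ - x⟩. -/

import Mathlib

open scoped InnerProductSpace

private lemma aux_limit_bd (C K : ℝ)
    (h : ∀ s : ℝ, 0 < s → s ≤ 1 → (1 - s) * K ≤ C) : K ≤ C := by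
  by_contra h'
  push_neg at h'
  have hC : 0 ≤ C := by have := h 1 one_pos le_rfl; linarith
  have hKpos : 0 < K := lt_of_le_of_lt hC h'
  have hs := h ((K - C) / (2 * K)) (div_pos (by linarith) (by linarith))
    (by rw [div_le_one (by linarith)]; linarith)
  have heq : (1 - (K - C) / (2 * K)) * K = (K + C) / 2 := by
    field_simp; ring
  rw [heq] at hs
  linarith

/-- For proper, lsc, strongly convex `Θ` (modulus `c₀`), if `ξ ∈ ∂Θ(x)` and
`ξ₊ ∈ ∂Θ(x₊)`, then for any `x̂`:
`D_{ξ₊}Θ(x̂, x₊) - D_ξΘ(x̂, x) ≤ ‖ξ₊ - ξ‖²/(4c₀) - ⟪ξ₊ - ξ, x̂ - x⟫`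
(stated equivalently in additive form, valid in the extended reals). -/
theorem bregman_difference_bound
    {X : Type*} [NormedAddCommGroup X] [InnerProductSpace ℝ X]
    (Θ : X → EReal) (c₀ : ℝ) (hc₀ : 0 < c₀)
    (hproper : (∀ z, Θ z ≠ ⊥) ∧ ∃ z, Θ z ≠ ⊤)
    (hlsc : LowerSemicontinuous Θ)
    (hsc : ∀ (z x : X) (s : ℝ), 0 ≤ s → s ≤ 1 →
      Θ (s • z + (1 - s) • x) + ((c₀ * s * (1 - s) * ‖z - x‖ ^ 2 : ℝ) : EReal)
        ≤ (s : EReal) * Θ z + ((1 - s : ℝ) : EReal) * Θ x)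
    (x xp ξ ξp : X)
    (hξ : ∀ z, Θ x + ((⟪ξ, z - x⟫_ℝ : ℝ) : EReal) ≤ Θ z)
    (hξp : ∀ z, Θ xp + ((⟪ξp, z - xp⟫_ℝ : ℝ) : EReal) ≤ Θ z)
    (xhat : X) :
    Θ xhat - Θ xp - ((⟪ξp, xhat - xp⟫_ℝ : ℝ) : EReal)
      ≤ (Θ xhat - Θ x - ((⟪ξ, xhat - x⟫_ℝ : ℝ) : EReal))
        + ((‖ξp - ξ‖ ^ 2 / (4 * c₀) - ⟪ξp - ξ, xhat - x⟫_ℝ : ℝ) : EReal) := by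
  obtain ⟨hbot, z₀, hz₀⟩ := hproper
  -- Θ x is finite
  have hxtop : Θ x ≠ ⊤ := by
    intro h
    have h1 := hξ z₀
    rw [h, EReal.top_add_coe, top_le_iff] at h1
    exact hz₀ h1
  have hxptop : Θ xp ≠ ⊤ := by
    intro h
    have h1 := hξp z₀
    rw [h, EReal.top_add_coe, top_le_iff] at h1
    exact hz₀ h1
  set a : ℝ := (Θ x).toReal with ha_def
  set b : ℝ := (Θ xp).toReal with hb_def
  have ha : Θ x = (a : EReal) := (EReal.coe_toReal hxtop (hbot x)).symm
  have hb : Θ xp = (b : EReal) := (EReal.coe_toReal hxptop (hbot xp)).symm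
  -- strengthened subgradient inequality at xp:
  -- ⟪ξ, xp - x⟫ + c₀ ‖xp - x‖² ≤ b - a
  have key : ⟪ξ, xp - x⟫_ℝ + c₀ * ‖xp - x‖ ^ 2 ≤ b - a := by
    have hstep : ∀ s : ℝ, 0 < s → s ≤ 1 →
        (1 - s) * (c₀ * ‖xp - x‖ ^ 2) ≤ b - a - ⟪ξ, xp - x⟫_ℝ := by
      intro s hs0 hs1
      have hm : s • xp + (1 - s) • x - x = s • (xp - x) := by module
      have h1 := hξ (s • xp + (1 - s) • x)
      have h2 := hsc xp x s hs0.le hs1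
      have h3 : Θ x + ((⟪ξ, s • xp + (1 - s) • x - x⟫_ℝ : ℝ) : EReal)
            + ((c₀ * s * (1 - s) * ‖xp - x‖ ^ 2 : ℝ) : EReal)
          ≤ (s : EReal) * Θ xp + ((1 - s : ℝ) : EReal) * Θ x :=
        le_trans (add_le_add_left h1 _) h2
      rw [ha, hb, hm, real_inner_smul_right] at h3
      have h4 : a + s * ⟪ξ, xp - x⟫_ℝ + c₀ * s * (1 - s) * ‖xp - x‖ ^ 2
          ≤ s * b + (1 - s) * a := by
        have := h3
        push_cast at this
        exact_mod_cast this
      have h5 : s * (⟪ξ, xp - x⟫_ℝ + c₀ * (1 - s) * ‖xp - x‖ ^ 2)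
          ≤ s * (b - a) := by nlinarith
      have h6 := le_of_mul_le_mul_left (by linarith [h5] : s * (⟪ξ, xp - x⟫_ℝ + c₀ * (1 - s) * ‖xp - x‖ ^ 2) ≤ s * (b - a)) hs0
      nlinarith
    have := aux_limit_bd (b - a - ⟪ξ, xp - x⟫_ℝ) (c₀ * ‖xp - x‖ ^ 2) hstep
    linarith
  by_cases hhat : Θ xhat = ⊤
  · rw [hhat, ha, hb]
    rw [show (⊤ : EReal) - (b : EReal) - ((⟪ξp, xhat - xp⟫_ℝ : ℝ) : EReal) = ⊤ by
      rw [EReal.top_sub_coe, EReal.top_sub_coe]]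
    rw [show (⊤ : EReal) - (a : EReal) - ((⟪ξ, xhat - x⟫_ℝ : ℝ) : EReal)
        + ((‖ξp - ξ‖ ^ 2 / (4 * c₀) - ⟪ξp - ξ, xhat - x⟫_ℝ : ℝ) : EReal) = ⊤ by
      rw [EReal.top_sub_coe, EReal.top_sub_coe, EReal.top_add_coe]]
  · set c : ℝ := (Θ xhat).toReal with hc_def
    have hc : Θ xhat = (c : EReal) := (EReal.coe_toReal hhat (hbot xhat)).symm
    rw [ha, hb, hc]
    rw [← EReal.coe_sub, ← EReal.coe_sub, ← EReal.coe_sub, ← EReal.coe_sub,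
      ← EReal.coe_add, EReal.coe_le_coe_iff]
    have he1 : ⟪ξp, xhat - x⟫_ℝ - ⟪ξp, xhat - xp⟫_ℝ = ⟪ξp, xp - x⟫_ℝ := by
      rw [← inner_sub_right]
      congr 1
      abel
    have he2 : ⟪ξp - ξ, xhat - x⟫_ℝ = ⟪ξp, xhat - x⟫_ℝ - ⟪ξ, xhat - x⟫_ℝ :=
      inner_sub_left _ _ _
    have he3 : ⟪ξp - ξ, xp - x⟫_ℝ = ⟪ξp, xp - x⟫_ℝ - ⟪ξ, xp - x⟫_ℝ :=
      inner_sub_left _ _ _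
    have hcs : ⟪ξp - ξ, xp - x⟫_ℝ ≤ ‖ξp - ξ‖ * ‖xp - x‖ :=
      real_inner_le_norm _ _
    have hq : ‖ξp - ξ‖ * ‖xp - x‖ ≤ ‖ξp - ξ‖ ^ 2 / (4 * c₀) + c₀ * ‖xp - x‖ ^ 2 := by
      rw [div_add' _ _ _ (by positivity), le_div_iff₀ (by positivity)]
      nlinarith [sq_nonneg (‖ξp - ξ‖ - 2 * c₀ * ‖xp - x‖)]
    linarith
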